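/- Let n ≥ 1 and π a permutation of {1,…,n}. An assignment of spins s : {1,…,n} → ℤ with s(i) ∈ {d⁺(π(i), i), d⁺(π(i), i) − n} for each i is a valid disbursement (i.e., moving each pebble p_i by displacement s(i) along the cycle brings it from v_{π(i)} to v_i simultaneously realizable by swaps) if and only if ∑_{i=1}^n s(i) = 0. -/

import Mathlib

/-- Clockwise distance from `a` to `b` on the cycle `C_n`, as an integer. -/
def dplus (n : ℕ) (a b : ZMod n) : ℤ := ((b - a).val : ℤ)

/-- `Realizes n π s` : starting from the configuration where pebble `p` sits at
vertex `π p`, there is a sequence of rounds, each consisting of swapping the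
pebbles on a set of pairwise disjoint edges of `C_n`, after which each pebble `p`
has net (signed, clockwise-positive) displacement `s p`.  Here `g t p` is the
cumulative displacement of pebble `p` after `t` rounds, so its position is
`π p + g t p (mod n)`. -/
def Realizes (n : ℕ) (π : Equiv.Perm (ZMod n)) (s : ZMod n → ℤ) : Prop :=
  ∃ (k : ℕ) (g : ℕ → ZMod n → ℤ), g 0 = 0 ∧ g k = s ∧
    ∀ t < k, ∃ M : Finset (ZMod n), (∀ i ∈ M, i + 1 ∉ M) ∧
      ∀ p : ZMod n,
        g (t + 1) p =
          if (π p + (g t p : ZMod n)) ∈ M then g t p + 1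
          else if (π p + (g t p : ZMod n)) - 1 ∈ M then g t p - 1
          else g t p


def Step (n : ℕ) (π : Equiv.Perm (ZMod n)) (g g' : ZMod n → ℤ) : Prop :=
  ∃ M : Finset (ZMod n), (∀ i ∈ M, i + 1 ∉ M) ∧
    ∀ p : ZMod n,
      g' p =
        if (π p + (g p : ZMod n)) ∈ M then g p + 1
        else if (π p + (g p : ZMod n)) - 1 ∈ M then g p - 1
        else g p

section Aux
variable {n : ℕ} [NeZero n]

lemma step_invariant (π : Equiv.Perm (ZMod n)) (g g' : ZMod n → ℤ)
    (h : Step n π g g')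
    (hinj : Function.Injective (fun p => π p + (g p : ZMod n))) :
    Function.Injective (fun p => π p + (g' p : ZMod n)) ∧ ∑ p, g' p = ∑ p, g p := by
  obtain ⟨M, hM, hg⟩ := h
  set σ : ZMod n → ZMod n := fun p => π p + (g p : ZMod n) with hσ
  set f : ZMod n → ZMod n := fun x => if x ∈ M then x + 1 else if x - 1 ∈ M then x - 1 else x with hf
  set δ : ZMod n → ℤ := fun x => if x ∈ M then 1 else if x - 1 ∈ M then -1 else 0 with hδ
  have hMexcl : ∀ x, x ∈ M → x - 1 ∉ M := by
    intro x hx hx'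
    have := hM _ hx'
    simp at this
    exact this hx
  have hg' : ∀ p, g' p = g p + δ (σ p) := by
    intro p
    rw [hg p]
    by_cases h1 : σ p ∈ M
    · simp only [hσ] at h1; simp [hδ, h1, hσ]
    · by_cases h2 : σ p - 1 ∈ M <;> simp only [hσ] at h1 h2 <;> simp [hδ, h1, h2, hσ] <;> ring
  have hσ' : ∀ p, π p + (g' p : ZMod n) = f (σ p) := by
    intro p
    rw [hg' p]
    by_cases h1 : σ p ∈ M
    · simp only [hσ] at h1; simp [hδ, hf, h1, hσ] <;> push_cast <;> ring
    · by_cases h2 : σ p - 1 ∈ M <;> simp only [hσ] at h1 h2 <;> simp [hδ, hf, h1, h2, hσ] <;> push_cast <;> ring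
  have hff : ∀ x, f (f x) = x := by
    intro x
    by_cases h1 : x ∈ M
    · have h2 : x + 1 ∉ M := hM _ h1
      have h3 : x + 1 - 1 ∈ M := by simpa using h1
      simp [hf, h1, h2, h3]
    · by_cases h2 : x - 1 ∈ M
      · have h3 : x - 1 + 1 ∉ M := hM _ h2
        simp only [hf, if_pos h2, if_neg h1]
        simp [if_neg (by simpa using h3), h2]
      · simp [hf, h1, h2]
  have hfinj : Function.Injective f := Function.LeftInverse.injective hff
  have hσbij : Function.Bijective σ := Finite.injective_iff_bijective.mp hinj
  constructor
  · have : (fun p => π p + (g' p : ZMod n)) = f ∘ σ := funext hσ'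
    rw [this]
    exact hfinj.comp hinj
  · have h1 : ∑ p, g' p = ∑ p, (g p + δ (σ p)) := by
      apply Finset.sum_congr rfl; intro p _; exact hg' p
    have h2 : ∑ p, δ (σ p) = ∑ x, δ x := Function.Bijective.sum_comp hσbij δ
    have h3 : ∑ x, δ x = 0 := by
      have hnuke : ∀ x, δ x = (if x ∈ M then (1:ℤ) else 0) - (if x - 1 ∈ M then (1:ℤ) else 0) := by
        intro x
        by_cases h1 : x ∈ M
        · simp [hδ, h1, hMexcl x h1]
        · by_cases h2 : x - 1 ∈ M <;> simp [hδ, h1, h2]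
      rw [Finset.sum_congr rfl (fun x _ => hnuke x), Finset.sum_sub_distrib]
      have : ∑ x : ZMod n, (if x - 1 ∈ M then (1:ℤ) else 0) = ∑ x : ZMod n, (if x ∈ M then (1:ℤ) else 0) :=
        Fintype.sum_equiv (Equiv.subRight (1 : ZMod n)) _ _ (fun x => rfl)
      rw [this, sub_self]
    rw [h1, Finset.sum_add_distrib, h2, h3, add_zero]

end Aux

section Aux2
variable {n : ℕ} [NeZero n]

lemma descent (ρ : ZMod n → ℤ) (hsum : ∑ x, ρ x = 0)
    (hinj : Function.Injective fun x => x + (ρ x : ZMod n)) (hne : ρ ≠ 0) :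
    ∃ x, ρ (x + 1) + 2 ≤ ρ x := by
  by_contra hcon
  push_neg at hcon
  have hmono : ∀ x, ρ x ≤ ρ (x + 1) := by
    intro x
    have h1 : ρ x ≤ ρ (x + 1) + 1 := by linarith [hcon x]
    rcases lt_or_eq_of_le h1 with h | h
    · omega
    · exfalso
      have : x + (ρ x : ZMod n) = (x + 1) + (ρ (x + 1) : ZMod n) := by
        rw [h]; push_cast; ring
      have hx := hinj this
      rw [← hx] at h
      omega
  have hle : ∀ (k : ℕ) (x : ZMod n), ρ x ≤ ρ (x + (k : ZMod n)) := by
    intro k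
    induction k with
    | zero => simp
    | succ k ih =>
      intro x
      calc ρ x ≤ ρ (x + (k : ZMod n)) := ih x
        _ ≤ ρ (x + (k : ZMod n) + 1) := hmono _
        _ = ρ (x + ((k + 1 : ℕ) : ZMod n)) := by push_cast; ring_nf
  have hconst : ∀ x y : ZMod n, ρ x ≤ ρ y := by
    intro x y
    have h1 : ((y - x).val : ZMod n) = y - x := by
      simp [ZMod.natCast_val, ZMod.cast_id]
    have := hle (y - x).val x
    rwa [h1, add_sub_cancel] at this
  have hρ0 : ∀ x, ρ x = ρ 0 := fun x => le_antisymm (hconst x 0) (hconst 0 x)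
  have : ∑ x : ZMod n, ρ x = (Fintype.card (ZMod n) : ℤ) * ρ 0 := by
    rw [Finset.sum_congr rfl (fun x _ => hρ0 x), Finset.sum_const, Finset.card_univ,
      nsmul_eq_mul]
  rw [hsum] at this
  have hcard : (Fintype.card (ZMod n) : ℤ) ≠ 0 := by
    simp [ZMod.card]
    exact NeZero.ne n
  have : ρ 0 = 0 := by
    rcases mul_eq_zero.mp this.symm with h | h
    · exact absurd h hcard
    · exact h
  exact hne (funext fun x => by simp only [Pi.zero_apply]; rw [hρ0 x, this])

end Aux2

section Aux3
variable {n : ℕ} [NeZero n]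

lemma reach (π : Equiv.Perm (ZMod n)) (s : ZMod n → ℤ)
    (hpos : ∀ p, π p + (s p : ZMod n) = p) :
    ∀ N : ℕ, ∀ g : ZMod n → ℤ,
      Function.Injective (fun p => π p + (g p : ZMod n)) →
      (∑ p, (s p - g p)) = 0 →
      (∑ p, (s p - g p) ^ 2) ≤ (N : ℤ) →
      ∃ (k : ℕ) (h : ℕ → ZMod n → ℤ), h 0 = g ∧ h k = s ∧
        ∀ t < k, Step n π (h t) (h (t + 1)) := by
  intro N
  induction N with
  | zero =>
    intro g hinj hsum hmeas
    have hgs : g = s := by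
      have hterm : ∀ p : ZMod n, p ∈ Finset.univ → (0:ℤ) ≤ (s p - g p)^2 :=
        fun p _ => sq_nonneg _
      have hall : ∀ p : ZMod n, p ∈ Finset.univ → (s p - g p)^2 = 0 := by
        intro p hp
        have h1 := Finset.single_le_sum hterm hp
        push_cast at hmeas
        linarith [sq_nonneg (s p - g p)]
      funext p
      have := hall p (Finset.mem_univ p)
      have := pow_eq_zero_iff (n := 2) (by norm_num) |>.mp this
      linarith
    exact ⟨0, fun _ => g, rfl, by rw [hgs], by omega⟩
  | succ N ih =>
    intro g hinj hsum hmeas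
    by_cases hgs : g = s
    · exact ⟨0, fun _ => g, rfl, by rw [hgs], by omega⟩
    · -- set up ρ
      have hσbij : Function.Bijective (fun p => π p + (g p : ZMod n)) :=
        Finite.injective_iff_bijective.mp hinj
      set e : ZMod n ≃ ZMod n := Equiv.ofBijective _ hσbij with he
      have heapp : ∀ p, e p = π p + (g p : ZMod n) := fun p => rfl
      set ρ : ZMod n → ℤ := fun x => s (e.symm x) - g (e.symm x) with hρ
      have hρsum : ∑ x, ρ x = 0 := by
        rw [hρ]
        rw [Equiv.sum_comp e.symm (fun p => s p - g p)]
        exact hsum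
      have hρpos : ∀ x, x + (ρ x : ZMod n) = e.symm x := by
        intro x
        have h1 : π (e.symm x) + (g (e.symm x) : ZMod n) = x := by
          rw [← heapp]; exact e.apply_symm_apply x
        have h2 := hpos (e.symm x)
        calc x + (ρ x : ZMod n)
            = π (e.symm x) + (g (e.symm x) : ZMod n)
              + ((s (e.symm x) - g (e.symm x) : ℤ) : ZMod n) := by rw [h1]
          _ = π (e.symm x) + (s (e.symm x) : ZMod n) := by push_cast; ring
          _ = e.symm x := h2
      have hρinj : Function.Injective (fun x => x + (ρ x : ZMod n)) := by
        have : (fun x => x + (ρ x : ZMod n)) = fun x => e.symm x := funext hρpos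
        rw [this]
        exact e.symm.injective
      have hρne : ρ ≠ 0 := by
        intro hc
        apply hgs
        funext p
        have := congrFun hc (e p)
        simp only [hρ, Pi.zero_apply, Equiv.symm_apply_apply] at this
        linarith
      obtain ⟨x, hx⟩ := descent ρ hρsum hρinj hρne
      set a := e.symm x with ha
      set b := e.symm (x + 1) with hb
      have hxx : x ≠ x + 1 := by
        intro hc
        rw [← hc] at hx
        omega
      have hab : a ≠ b := fun hc => hxx (e.symm.injective hc)
      set g' : ZMod n → ℤ := fun p => if p = a then g p + 1 else if p = b then g p - 1 else g p with hg'
      have hσa : π a + (g a : ZMod n) = x := by rw [← heapp]; exact e.apply_symm_apply x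
      have hσb : π b + (g b : ZMod n) = x + 1 := by rw [← heapp]; exact e.apply_symm_apply (x+1)
      have hstep : Step n π g g' := by
        refine ⟨{x}, ?_, ?_⟩
        · intro i hi
          simp only [Finset.mem_singleton] at hi
          subst hi
          simp only [Finset.mem_singleton]
          exact Ne.symm hxx
        · intro p
          by_cases hpa : p = a
          · subst hpa
            simp [hg', hσa]
          · by_cases hpb : p = b
            · subst hpb
              have h1 : π b + (g b : ZMod n) ∉ ({x} : Finset (ZMod n)) := by
                simp only [Finset.mem_singleton, hσb]
                exact Ne.symm hxx
              have h2 : π b + (g b : ZMod n) - 1 ∈ ({x} : Finset (ZMod n)) := by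
                simp [hσb]
              simp [hg', h1, h2, hab, Ne.symm hab]
            · have h1 : π p + (g p : ZMod n) ∉ ({x} : Finset (ZMod n)) := by
                simp
                intro hc
                exact hpa (by rw [ha, ← hc, ← heapp, Equiv.symm_apply_apply])
              have h2 : π p + (g p : ZMod n) - 1 ∉ ({x} : Finset (ZMod n)) := by
                simp
                intro hc
                apply hpb
                have : π p + (g p : ZMod n) = x + 1 := by rw [← hc]; ring
                rw [hb, ← this, ← heapp, Equiv.symm_apply_apply]
              simp [hg', h1, h2, hpa, hpb]
      -- invariants for g'
      have hinv := step_invariant π g g' hstep hinj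
      have hsum' : ∑ p, (s p - g' p) = 0 := by
        have h1 : ∑ p, (s p - g' p) = ∑ p, s p - ∑ p, g' p := by rw [Finset.sum_sub_distrib]
        have h2 : ∑ p, (s p - g p) = ∑ p, s p - ∑ p, g p := by rw [Finset.sum_sub_distrib]
        rw [h1, hinv.2, ← h2, hsum]
      have hra : ρ x = s a - g a := by rw [hρ]
      have hrb : ρ (x+1) = s b - g b := by rw [hρ]
      have hmeas' : ∑ p, (s p - g' p) ^ 2 ≤ (N : ℤ) := by
        have hdiff : ∀ p, (s p - g' p)^2 = (s p - g p)^2 +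
            ((if p = a then (-2*(s a - g a) + 1 : ℤ) else 0) + (if p = b then (2*(s b - g b) + 1 : ℤ) else 0)) := by
          intro p
          by_cases hpa : p = a
          · subst hpa
            simp [hg', hab]
            ring
          · by_cases hpb : p = b
            · subst hpb
              simp [hg', hpa]
              ring
            · simp [hg', hpa, hpb]
        rw [Finset.sum_congr rfl (fun p _ => hdiff p), Finset.sum_add_distrib,
          Finset.sum_add_distrib, Finset.sum_ite_eq' , Finset.sum_ite_eq']
        simp only [Finset.mem_univ, if_true]
        rw [← hra, ← hrb] at *
        push_cast at hmeas
        nlinarith [hx, hmeas]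
      obtain ⟨k, h, h0, hk, hsteps⟩ := ih g' hinv.1 hsum' hmeas'
      refine ⟨k + 1, fun t => Nat.casesOn t g h, rfl, hk, ?_⟩
      intro t ht
      cases t with
      | zero =>
        simpa [h0] using hstep
      | succ t =>
        exact hsteps t (by omega)

end Aux3

/-- An assignment of spins `s i ∈ {d⁺(π(i), i), d⁺(π(i), i) − n}` is a valid
disbursement (realizable by a sequence of swaps bringing every pebble to its
destination) if and only if the spins sum to zero. -/
theorem stmt1 (n : ℕ) [NeZero n] (π : Equiv.Perm (ZMod n)) (s : ZMod n → ℤ)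
    (hs : ∀ i, s i = dplus n (π i) i ∨ s i = dplus n (π i) i - n) :
    Realizes n π s ↔ ∑ i, s i = 0 := by
  constructor
  · rintro ⟨k, g, h0, hk, hsteps⟩
    have key : ∀ t, t ≤ k →
        Function.Injective (fun p => π p + (g t p : ZMod n)) ∧ ∑ p, g t p = 0 := by
      intro t
      induction t with
      | zero =>
        intro _
        constructor
        · have : (fun p => π p + (g 0 p : ZMod n)) = fun p => π p := by
            funext p; rw [h0]; simp
          rw [this]
          exact π.injective
        · rw [h0]; simp
      | succ t ih =>
        intro ht
        have h1 := ih (by omega)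
        have hstep : Step n π (g t) (g (t + 1)) := hsteps t (by omega)
        have h2 := step_invariant π (g t) (g (t + 1)) hstep h1.1
        exact ⟨h2.1, h2.2.trans h1.2⟩
    have := (key k le_rfl).2
    rw [hk] at this
    exact this
  · intro hsum
    have hpos : ∀ p, π p + (s p : ZMod n) = p := by
      intro p
      have hv : (((p - π p).val : ℤ) : ZMod n) = p - π p := by
        push_cast
        simp [ZMod.natCast_val, ZMod.cast_id]
      rcases hs p with h | h <;> rw [h] <;> simp only [dplus]
      · rw [hv]; ring
      · push_cast
        have hv' : (((p - π p).val : ℕ) : ZMod n) = p - π p := by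
          simp [ZMod.natCast_val, ZMod.cast_id]
        rw [hv', ZMod.natCast_self]
        ring
    have hinj0 : Function.Injective (fun p : ZMod n => π p + (((0 : ZMod n → ℤ) p : ℤ) : ZMod n)) := by
      have : (fun p : ZMod n => π p + (((0 : ZMod n → ℤ) p : ℤ) : ZMod n)) = fun p => π p := by
        funext p; simp
      rw [this]
      exact π.injective
    have hsum0 : ∑ p, (s p - (0 : ZMod n → ℤ) p) = 0 := by simpa using hsum
    have hmeas0 : ∑ p, (s p - (0 : ZMod n → ℤ) p) ^ 2 ≤ (((∑ p, (s p) ^ 2).toNat : ℕ) : ℤ) := by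
      rw [Int.toNat_of_nonneg (by positivity)]
      simp
    obtain ⟨k, h, h0, hk, hsteps⟩ := reach π s hpos (∑ p, (s p) ^ 2).toNat 0 hinj0 hsum0 hmeas0
    exact ⟨k, h, h0, hk, fun t ht => hsteps t ht⟩
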